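/- Let d_n be defined by the recursion for F_2-point counts of the type D_n cluster variety. Then for n ≥ 4, the number of F_2-points of the type D_n cluster variety equals (5·2^n + 7·(-1)^n)/3; in particular the sequence b_n = (5·2^n + 7·(-1)^n)/3 satisfies b_n = b_{n-1} + 2·b_{n-2} with b_4 = 29 and b_5 = 51. -/

import Mathlib

/-- The projective line over a field `F`. -/
abbrev P1 (F : Type*) [Field F] := Projectivization F (F × F)

/-- The point `[1:0]` of the projective line. -/
noncomputable def ptZero (F : Type*) [Field F] : P1 F :=
  Projectivization.mk F (1, 0) (fun h => one_ne_zero (congrArg Prod.fst h))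

/-- The point `[0:1]` of the projective line. -/
noncomputable def ptInf (F : Type*) [Field F] : P1 F :=
  Projectivization.mk F (0, 1) (fun h => one_ne_zero (congrArg Prod.snd h))

/-- The point `[1:1]` of the projective line. -/
noncomputable def ptOne (F : Type*) [Field F] : P1 F :=
  Projectivization.mk F (1, 1) (fun h => one_ne_zero (congrArg Prod.fst h))

/-- `p = (i, j)` is a diagonal of the convex `(m+1)`-gon with vertices `0, …, m`:
`i < j`, the two vertices are not consecutive, and `(0, m)` is excluded (it is a side). -/
def IsDiag (m : ℕ) (p : ℕ × ℕ) : Prop :=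
  p.1 + 2 ≤ p.2 ∧ p.2 ≤ m ∧ ¬(p.1 = 0 ∧ p.2 = m)

instance (m : ℕ) (p : ℕ × ℕ) : Decidable (IsDiag m p) := by unfold IsDiag; infer_instance

/-- The type of diagonals of the convex `(m+1)`-gon. -/
abbrev Diagonal (m : ℕ) := {p : ℕ × ℕ // IsDiag m p}

/-- Two diagonals cross in the interior of the polygon. -/
def Crossing {m : ℕ} (d e : Diagonal m) : Prop :=
  (d.val.1 < e.val.1 ∧ e.val.1 < d.val.2 ∧ d.val.2 < e.val.2) ∨
  (e.val.1 < d.val.1 ∧ d.val.1 < e.val.2 ∧ e.val.2 < d.val.2)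

/-- A triangulation of the convex `(m+1)`-gon: a maximal set of pairwise
non-crossing diagonals (maximality = having `(m+1) - 3` diagonals). -/
structure Triangulation (m : ℕ) where
  diags : Finset (Diagonal m)
  noncross : ∀ d ∈ diags, ∀ e ∈ diags, ¬ Crossing d e
  card_eq : diags.card = m - 2

/-- `y` takes distinct values on the endpoints of every diagonal of `T`
(i.e. `y` lies in the cluster torus of `T`). -/
def ProperDiags {F : Type*} [Field F] {m : ℕ} (T : Triangulation m) (y : ℕ → P1 F) : Prop :=
  ∀ d ∈ T.diags, y d.val.1 ≠ y d.val.2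

/-- `c` is a proper coloring of the full graph of the triangulation `T`
(sides of the polygon together with the diagonals of `T`). -/
def ProperGraph {F : Type*} [Field F] {m : ℕ} (T : Triangulation m) (c : ℕ → P1 F) : Prop :=
  (∀ i < m, c i ≠ c (i + 1)) ∧ c m ≠ c 0 ∧ ProperDiags T c

/-- `y` is a point of `X_F(m)`: `y 0 = [1:0]`, `y m = [0:1]`, consecutive entries distinct. -/
def XCond (F : Type*) [Field F] (m : ℕ) (y : ℕ → P1 F) : Prop :=
  y 0 = ptZero F ∧ y m = ptInf F ∧ ∀ i < m, y i ≠ y (i + 1)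

/-- `y` is the alternating sequence `([1:0], [0:1], [1:0], …)` on `0, …, m`. -/
def IsAltSeq (F : Type*) [Field F] (m : ℕ) (y : ℕ → P1 F) : Prop :=
  ∀ i ≤ m, y i = if i % 2 = 0 then ptZero F else ptInf F

/-- The diagonal `d` is valid for the point `y`: its endpoints have distinct labels and
on each of the two sub-polygons determined by `d` the labels take at least three values. -/
def ValidDiag (F : Type*) [Field F] (m : ℕ) (y : ℕ → P1 F) (d : Diagonal m) : Prop :=
  y d.val.1 ≠ y d.val.2 ∧
  3 ≤ (y '' (Set.Icc d.val.1 d.val.2)).ncard ∧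
  3 ≤ (y '' (Set.Icc 0 d.val.1 ∪ Set.Icc d.val.2 m)).ncard

/-- `T'` is obtained from `T` by removing the diagonals `old` and adding the diagonals `new`. -/
def SwapMove {m : ℕ} (T T' : Triangulation m) (old new : Finset (Diagonal m)) : Prop :=
  old ⊆ T.diags ∧ T'.diags = (T.diags \ old) ∪ new

/-- Zig-zag hexagonal move: inside a hexagonal sub-polygon with vertices
`v 0 < ⋯ < v 5`, replace the zig-zag `{15, 35, 36}` by the zig-zag `{24, 26, 46}`
(in the labels `1, …, 6` of the hexagon). -/
def ZigZagMoveOne {m : ℕ} (T T' : Triangulation m) : Prop :=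
  ∃ v : Fin 6 → ℕ, StrictMono v ∧ v 5 ≤ m ∧
    ∃ (h1 : IsDiag m (v 0, v 4)) (h2 : IsDiag m (v 2, v 4)) (h3 : IsDiag m (v 2, v 5))
      (h4 : IsDiag m (v 1, v 3)) (h5 : IsDiag m (v 1, v 5)) (h6 : IsDiag m (v 3, v 5)),
      SwapMove T T' {⟨(v 0, v 4), h1⟩, ⟨(v 2, v 4), h2⟩, ⟨(v 2, v 5), h3⟩}
        {⟨(v 1, v 3), h4⟩, ⟨(v 1, v 5), h5⟩, ⟨(v 3, v 5), h6⟩}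

/-- Inscribed-triangle hexagonal move: inside a hexagonal sub-polygon with vertices
`v 0 < ⋯ < v 5`, replace the inscribed triangle `{13, 35, 51}` by `{24, 46, 62}`. -/
def InscribedMoveOne {m : ℕ} (T T' : Triangulation m) : Prop :=
  ∃ v : Fin 6 → ℕ, StrictMono v ∧ v 5 ≤ m ∧
    ∃ (h1 : IsDiag m (v 0, v 2)) (h2 : IsDiag m (v 2, v 4)) (h3 : IsDiag m (v 0, v 4))
      (h4 : IsDiag m (v 1, v 3)) (h5 : IsDiag m (v 3, v 5)) (h6 : IsDiag m (v 1, v 5)),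
      SwapMove T T' {⟨(v 0, v 2), h1⟩, ⟨(v 2, v 4), h2⟩, ⟨(v 0, v 4), h3⟩}
        {⟨(v 1, v 3), h4⟩, ⟨(v 3, v 5), h5⟩, ⟨(v 1, v 5), h6⟩}

/-- A hexagonal move (in either direction). -/
def HexMove {m : ℕ} (T T' : Triangulation m) : Prop :=
  ZigZagMoveOne T T' ∨ ZigZagMoveOne T' T ∨ InscribedMoveOne T T' ∨ InscribedMoveOne T' T

/-- The `F₂`-points of the cluster variety of an acyclic quiver with arrow function `arr`
(all vertices mutable, frozen variables being set to `1`): tuples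
`(x, x')` satisfying the exchange relation at every vertex. -/
abbrev QPoints {V : Type*} [Fintype V] [DecidableEq V] (arr : V → V → Bool) : Type _ :=
  {p : (V → ZMod 2) × (V → ZMod 2) //
    ∀ k, p.1 k * p.2 k =
      (∏ j ∈ Finset.univ.filter (fun j => arr k j = true), p.1 j) +
      ∏ j ∈ Finset.univ.filter (fun j => arr j k = true), p.1 j}

/-- The quiver has no directed cycles. -/
def QAcyclic {V : Type*} (arr : V → V → Bool) : Prop :=
  ∀ v, ¬ Relation.TransGen (fun i j => arr i j = true) v v
/-- An orientation of the type `D_n` Dynkin diagram: the path `0 → 1 → ⋯ → (n-2)`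
together with the arrow `(n-3) → (n-1)`. -/
def dArr (n : ℕ) : Fin n → Fin n → Bool := fun i j =>
  decide ((j.val = i.val + 1 ∧ j.val ≤ n - 2) ∨ (i.val = n - 3 ∧ j.val = n - 1))


namespace DCount

/-- number of `y` with `a * y = r` in `ZMod 2`. -/
def w (a r : ZMod 2) : ℕ := if a = 1 then 1 else if r = 0 then 2 else 0

lemma card_w (a r : ZMod 2) : Fintype.card {y : ZMod 2 // a * y = r} = w a r := by
  revert a r; decide

lemma qpoints_card {V : Type*} [Fintype V] [DecidableEq V] (arr : V → V → Bool) :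
    Fintype.card (QPoints arr) =
      ∑ x : V → ZMod 2, ∏ k : V,
        w (x k) ((∏ j ∈ Finset.univ.filter (fun j => arr k j = true), x j) +
                 ∏ j ∈ Finset.univ.filter (fun j => arr j k = true), x j) := by
  rw [Fintype.card_congr (Equiv.subtypeProdEquivSigmaSubtype
      (fun (x x' : V → ZMod 2) => ∀ k, x k * x' k =
        (∏ j ∈ Finset.univ.filter (fun j => arr k j = true), x j) +
        ∏ j ∈ Finset.univ.filter (fun j => arr j k = true), x j))]
  rw [Fintype.card_sigma]
  refine Finset.sum_congr rfl fun x _ => ?_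
  rw [Fintype.card_congr (Equiv.subtypePiEquivPi
      (p := fun (k : V) (y : ZMod 2) => x k * y =
        (∏ j ∈ Finset.univ.filter (fun j => arr k j = true), x j) +
        ∏ j ∈ Finset.univ.filter (fun j => arr j k = true), x j)), Fintype.card_pi]
  exact Finset.prod_congr rfl fun k _ => card_w _ _

def OutP (n : ℕ) (x : Fin n → ZMod 2) (k : Fin n) : ZMod 2 :=
  ∏ j : Fin n, if dArr n k j = true then x j else 1

def InP (n : ℕ) (e : ZMod 2) (x : Fin n → ZMod 2) (k : Fin n) : ZMod 2 :=
  (if k.val = 0 then e else 1) * ∏ i : Fin n, if dArr n i k = true then x i else 1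

def Wmod (n : ℕ) (e : ZMod 2) (x : Fin n → ZMod 2) : ℕ :=
  ∏ k, w (x k) (OutP n x k + InP n e x k)

lemma wmod_cons (m : ℕ) (e a : ZMod 2) (y : Fin (m + 4) → ZMod 2) :
    Wmod (m + 5) e (Fin.cons a y) = w a (y 0 + e) * Wmod (m + 4) a y := by
  unfold Wmod
  rw [Fin.prod_univ_succ]
  refine congrArg₂ HMul.hMul ?_ ?_
  · -- vertex 0
    have h0 : OutP (m + 5) (Fin.cons a y) 0 = y 0 := by
      unfold OutP
      rw [Fin.prod_univ_succ]
      have c0 : dArr (m + 5) 0 0 = false := by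
        simp only [dArr, decide_eq_false_iff_not]
        simp only [Fin.val_zero]; omega
      rw [c0]
      have : ∀ j : Fin (m + 4),
          (if dArr (m + 5) 0 j.succ = true then ((Fin.cons a y : Fin (m + 5) → ZMod 2)) j.succ else 1)
          = (if j = 0 then y j else 1) := by
        intro j
        rw [Fin.cons_succ]
        refine if_congr ?_ rfl rfl
        simp only [dArr, decide_eq_true_eq]
        simp only [dArr, decide_eq_true_eq, Fin.val_succ, Fin.val_zero, Fin.ext_iff]
        omega
      simp only [this]
      rw [Finset.prod_ite_eq' Finset.univ 0 y]
      simp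
    have h1 : InP (m + 5) e (Fin.cons a y) 0 = e := by
      unfold InP
      have : ∀ i : Fin (m + 5), (if dArr (m + 5) i 0 = true then ((Fin.cons a y : Fin (m + 5) → ZMod 2)) i else 1) = 1 := by
        intro i
        have : dArr (m + 5) i 0 = false := by
          simp only [dArr, decide_eq_false_iff_not]
          simp only [dArr, decide_eq_false_iff_not, Fin.val_zero]; omega
        rw [this]; simp
      simp only [this, Finset.prod_const_one, Fin.val_zero, if_pos rfl, mul_one, if_true]
    rw [h0, h1, Fin.cons_zero]
  · -- tail
    refine Finset.prod_congr rfl fun k _ => ?_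
    rw [Fin.cons_succ]
    refine congrArg (w (y k)) (congrArg₂ HAdd.hAdd ?_ ?_)
    · -- OutP
      unfold OutP
      rw [Fin.prod_univ_succ]
      have c0 : dArr (m + 5) k.succ 0 = false := by
        simp only [dArr, decide_eq_false_iff_not]
        simp only [dArr, decide_eq_false_iff_not, Fin.val_zero, Fin.val_succ]; omega
      rw [c0]
      have : ∀ j : Fin (m + 4),
          (if dArr (m + 5) k.succ j.succ = true then ((Fin.cons a y : Fin (m + 5) → ZMod 2)) j.succ else 1)
          = (if dArr (m + 4) k j = true then y j else 1) := by
        intro j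
        rw [Fin.cons_succ]
        refine if_congr ?_ rfl rfl
        simp only [dArr, decide_eq_true_eq, Fin.val_succ]
        omega
      simp only [this]
      simp
    · -- InP
      unfold InP
      rw [Fin.prod_univ_succ, Fin.cons_zero]
      have c0 : (if dArr (m + 5) 0 k.succ = true then a else 1) = (if k.val = 0 then a else 1) := by
        refine if_congr ?_ rfl rfl
        simp only [dArr, decide_eq_true_eq]
        simp only [dArr, decide_eq_true_eq, Fin.val_succ, Fin.val_zero]
        omega
      have : ∀ i : Fin (m + 4),
          (if dArr (m + 5) i.succ k.succ = true then ((Fin.cons a y : Fin (m + 5) → ZMod 2)) i.succ else 1)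
          = (if dArr (m + 4) i k = true then y i else 1) := by
        intro i
        rw [Fin.cons_succ]
        refine if_congr ?_ rfl rfl
        simp only [dArr, decide_eq_true_eq, Fin.val_succ]
        omega
      simp only [this, c0, Fin.val_succ]
      simp

def Smod (m : ℕ) (e b : ZMod 2) : ℕ :=
  ∑ x : Fin (m + 4) → ZMod 2, if x 0 = b then Wmod (m + 4) e x else 0

lemma sum_zmod2 (f : ZMod 2 → ℕ) : ∑ c : ZMod 2, f c = f 0 + f 1 := by
  rw [show (Finset.univ : Finset (ZMod 2)) = {0, 1} from by decide,
    Finset.sum_pair (by decide : (0 : ZMod 2) ≠ 1)]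

lemma smod_succ (m : ℕ) (e b : ZMod 2) :
    Smod (m + 1) e b = ∑ c : ZMod 2, w b (c + e) * Smod m b c := by
  unfold Smod
  rw [← Equiv.sum_comp (Fin.consEquiv (n := m + 4) (α := fun _ => ZMod 2))
    (fun x : Fin (m + 5) → ZMod 2 => if x 0 = b then Wmod (m + 5) e x else 0)]
  rw [Fintype.sum_prod_type]
  have key : ∀ (a : ZMod 2) (y : Fin (m + 4) → ZMod 2),
      (if (Fin.consEquiv (fun _ => ZMod 2)) (a, y) 0 = b then
        Wmod (m + 5) e ((Fin.consEquiv (fun _ => ZMod 2)) (a, y)) else 0) =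
      if a = b then w a (y 0 + e) * Wmod (m + 4) a y else 0 := by
    intro a y
    have h1 : (Fin.consEquiv (fun _ => ZMod 2)) (a, y) = Fin.cons a y := rfl
    rw [h1, Fin.cons_zero, wmod_cons]
  simp only [key]
  have h2 : ∀ a : ZMod 2,
      (∑ y : Fin (m + 4) → ZMod 2, if a = b then w a (y 0 + e) * Wmod (m + 4) a y else 0)
      = if a = b then (∑ y : Fin (m + 4) → ZMod 2, w a (y 0 + e) * Wmod (m + 4) a y) else 0 :=
    fun a => by split <;> simp
  simp only [h2]
  rw [Finset.sum_ite_eq' Finset.univ b]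
  simp only [Finset.mem_univ, if_true]
  have h3 : ∀ y : Fin (m + 4) → ZMod 2, w b (y 0 + e) * Wmod (m + 4) b y
      = ∑ c : ZMod 2, if y 0 = c then w b (c + e) * Wmod (m + 4) b y else 0 := by
    intro y
    rw [Finset.sum_ite_eq]
    simp
  simp only [h3]
  rw [Finset.sum_comm]
  refine Finset.sum_congr rfl fun c _ => ?_
  rw [Finset.mul_sum]
  simp only [mul_ite, mul_zero]

def Eh : ℕ → ZMod 2 → ZMod 2 → ℕ
  | 0 => Smod 0
  | (m + 1) => fun e b => ∑ c : ZMod 2, w b (c + e) * Eh m b c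

lemma smod_eq_eh : ∀ m e b, Smod m e b = Eh m e b := by
  intro m
  induction m with
  | zero => intro e b; rfl
  | succ m ih =>
    intro e b
    rw [smod_succ]
    simp only [ih]
    rfl

def Dh (m : ℕ) : ℕ := Eh m 1 0 + Eh m 1 1

lemma eh_one (m : ℕ) (e : ZMod 2) : Eh (m + 1) e 1 = Dh m := by
  show (∑ c : ZMod 2, w 1 (c + e) * Eh m 1 c) = _
  rw [sum_zmod2]
  simp [w, Dh]

lemma dh_rec (m : ℕ) : Dh (m + 2) = Dh (m + 1) + 2 * Dh m := by
  have h1 : Eh (m + 2) 1 1 = Dh (m + 1) := eh_one (m + 1) 1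
  have h2 : Eh (m + 2) 1 0 = 2 * Dh m := by
    show (∑ c : ZMod 2, w 0 (c + 1) * Eh (m + 1) 0 c) = _
    rw [sum_zmod2]
    have : Eh (m + 1) 0 1 = Dh m := eh_one m 0
    rw [this, show w 0 (0 + 1) = 0 from by decide, show w 0 (1 + 1) = 2 from by decide]
    omega
  show Eh (m + 2) 1 0 + Eh (m + 2) 1 1 = _
  rw [h1, h2]
  omega

lemma dh_zero : Dh 0 = 29 := by decide

lemma dh_one : Dh 1 = 51 := by decide

lemma wmod_one (n : ℕ) (x : Fin n → ZMod 2) :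
    (∏ k : Fin n, w (x k)
      ((∏ j ∈ Finset.univ.filter (fun j => dArr n k j = true), x j) +
       ∏ j ∈ Finset.univ.filter (fun j => dArr n j k = true), x j)) = Wmod n 1 x := by
  unfold Wmod OutP InP
  simp [Finset.prod_filter]

lemma sum_wmod (m : ℕ) : ∑ x : Fin (m + 4) → ZMod 2, Wmod (m + 4) 1 x = Dh m := by
  have h : ∀ x : Fin (m + 4) → ZMod 2,
      Wmod (m + 4) 1 x = ∑ b : ZMod 2, if x 0 = b then Wmod (m + 4) 1 x else 0 := by
    intro x
    rw [Finset.sum_ite_eq]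
    simp
  calc ∑ x : Fin (m + 4) → ZMod 2, Wmod (m + 4) 1 x
      = ∑ x : Fin (m + 4) → ZMod 2, ∑ b : ZMod 2, if x 0 = b then Wmod (m + 4) 1 x else 0 :=
        Finset.sum_congr rfl fun x _ => h x
    _ = ∑ b : ZMod 2, ∑ x : Fin (m + 4) → ZMod 2, if x 0 = b then Wmod (m + 4) 1 x else 0 :=
        Finset.sum_comm
    _ = ∑ b : ZMod 2, Smod m 1 b := rfl
    _ = Smod m 1 0 + Smod m 1 1 := sum_zmod2 _
    _ = Dh m := by rw [smod_eq_eh, smod_eq_eh]; rfl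

set_option maxHeartbeats 2000000 in
lemma card_darr (m : ℕ) : Fintype.card (QPoints (dArr (m + 4))) = Dh m := by
  have hinst : ∀ (i j : Fintype (QPoints (dArr (m + 4)))),
      @Fintype.card _ i = @Fintype.card _ j := fun i j => by
    congr 1
    exact Subsingleton.elim i j
  refine Eq.trans (hinst _ _) ((qpoints_card (dArr (m + 4))).trans ?_)
  rw [Finset.sum_congr rfl (fun x _ => wmod_one (m + 4) x), sum_wmod]

end DCount

theorem stmt19 (B : ℕ → ℤ) (hB : ∀ n, 3 * B n = 5 * 2 ^ n + 7 * (-1) ^ n) :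
    (∀ n, 4 ≤ n → (Fintype.card (QPoints (dArr n)) : ℤ) = B n) ∧
    B 4 = 29 ∧ B 5 = 51 ∧ ∀ n, 2 ≤ n → B n = B (n - 1) + 2 * B (n - 2) := by

  have hB4 : B 4 = 29 := by have := hB 4; norm_num at this; omega
  have hB5 : B 5 = 51 := by have := hB 5; norm_num at this; omega
  have hrec : ∀ k, B (k + 2) = B (k + 1) + 2 * B k := by
    intro k
    have h1 := hB k
    have h2 := hB (k + 1)
    have h3 := hB (k + 2)
    rw [pow_succ, pow_succ] at h2
    rw [pow_succ, pow_succ, pow_succ, pow_succ] at h3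
    nlinarith [h1, h2, h3]
  have dh_int : ∀ m, (DCount.Dh m : ℤ) = B (m + 4) := by
    intro m
    induction m using Nat.strong_induction_on with
    | _ m ih =>
      match m with
      | 0 => rw [DCount.dh_zero, hB4]; rfl
      | 1 => rw [DCount.dh_one, hB5]; rfl
      | (k + 2) =>
        rw [DCount.dh_rec]
        push_cast
        rw [ih (k + 1) (by omega), ih k (by omega)]
        have := hrec (k + 4)
        have e1 : k + 1 + 4 = k + 4 + 1 := by omega
        have e2 : k + 2 + 4 = k + 4 + 2 := by omega
        rw [e1, e2, this]
  refine ⟨?_, hB4, hB5, ?_⟩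
  · intro n hn
    obtain ⟨m, rfl⟩ : ∃ m, n = m + 4 := ⟨n - 4, by omega⟩
    rw [DCount.card_darr m]
    exact dh_int m
  · intro n hn
    obtain ⟨k, rfl⟩ : ∃ k, n = k + 2 := ⟨n - 2, by omega⟩
    exact hrec k
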